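/- The splitting algebra A_f of a monic polynomial f of degree n over a commutative ring A is a free A-module with basis given by the monomials τ_2^{m_2} τ_3^{m_3} ··· τ_n^{m_n} with 0 ≤ m_i < i for i = 2, 3, ..., n; in particular A_f is free of rank n! over A. -/

import Mathlib

open MvPolynomial Polynomial

/-- The ideal `(s₁ - f₁, ..., sₙ - fₙ)` defining the splitting algebra, where
`fᵢ = (-1)^i · coeff f (n - i)` are the signed coefficients of `f`. -/
noncomputable def splittingIdeal (A : Type*) [CommRing A] (f : Polynomial A) (n : ℕ) :
    Ideal (MvPolynomial (Fin n) A) :=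
  Ideal.span (Set.range fun i : Fin n =>
    esymm (Fin n) A ((i : ℕ) + 1) -
      MvPolynomial.C ((-1 : A) ^ ((i : ℕ) + 1) * f.coeff (n - ((i : ℕ) + 1))))

/-- The splitting algebra `A_f = A[t₁,...,tₙ]/(s₁ - f₁, ..., sₙ - fₙ)`. -/
noncomputable def SplittingAlgebra (A : Type*) [CommRing A] (f : Polynomial A) (n : ℕ) :=
  MvPolynomial (Fin n) A ⧸ splittingIdeal A f n

noncomputable instance (A : Type*) [CommRing A] (f : Polynomial A) (n : ℕ) :
    CommRing (SplittingAlgebra A f n) := Ideal.Quotient.commRing _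

noncomputable instance (R A : Type*) [CommSemiring R] [CommRing A] [Algebra R A]
    (f : Polynomial A) (n : ℕ) : Algebra R (SplittingAlgebra A f n) :=
  Ideal.Quotient.algebra R

/-- The universal roots `τᵢ` of `f` in the splitting algebra. -/
noncomputable def univRoot (A : Type*) [CommRing A] (f : Polynomial A) (n : ℕ) (i : Fin n) :
    SplittingAlgebra A f n :=
  Ideal.Quotient.mk (splittingIdeal A f n) (MvPolynomial.X i)

/-- The action of a permutation `σ` on the splitting algebra, sending `τᵢ` to `τ_{σ⁻¹ i}`. -/
noncomputable def permHom (A : Type*) [CommRing A] (f : Polynomial A) (n : ℕ)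
    (σ : Equiv.Perm (Fin n)) : SplittingAlgebra A f n →ₐ[A] SplittingAlgebra A f n :=
  Ideal.Quotient.liftₐ (splittingIdeal A f n)
    ((Ideal.Quotient.mkₐ A (splittingIdeal A f n)).comp
      (rename (σ.symm : Fin n → Fin n)))
    (by
      intro a ha
      have h : splittingIdeal A f n ≤ RingHom.ker
          ((Ideal.Quotient.mkₐ A (splittingIdeal A f n)).comp
            (rename (σ.symm : Fin n → Fin n))) := by
        rw [splittingIdeal, Ideal.span_le]
        rintro _ ⟨i, rfl⟩
        have : (rename (σ.symm : Fin n → Fin n))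
            (esymm (Fin n) A ((i : ℕ) + 1) -
              MvPolynomial.C ((-1 : A) ^ ((i : ℕ) + 1) * f.coeff (n - ((i : ℕ) + 1)))) =
            esymm (Fin n) A ((i : ℕ) + 1) -
              MvPolynomial.C ((-1 : A) ^ ((i : ℕ) + 1) * f.coeff (n - ((i : ℕ) + 1))) := by
          rw [map_sub, rename_esymm, rename_C]
        simp only [SetLike.mem_coe, RingHom.mem_ker, AlgHom.coe_comp, Function.comp_apply, this]
        rw [Ideal.Quotient.mkₐ_eq_mk, Ideal.Quotient.eq_zero_iff_mem]
        exact Ideal.subset_span ⟨i, rfl⟩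
      exact h ha)



open MvPolynomial Polynomial Finset

/-- Coefficients of `∏ (X - C wᵢ)` via elementary symmetric functions (Vieta). -/
lemma prodXsubC_coeff {S : Type*} [CommRing S] {N : ℕ} (w : Fin N → S) {j : ℕ} (hj : j ≤ N) :
    (∏ i : Fin N, (Polynomial.X - Polynomial.C (w i))).coeff j =
      (-1) ^ (N - j) * (Finset.univ.val.map w).esymm (N - j) := by
  have hcard : Multiset.card (Finset.univ.val.map w) = N := by simp
  have h := Multiset.prod_X_sub_C_coeff (Finset.univ.val.map w) (k := j) (by rw [hcard]; exact hj)
  rw [hcard] at h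
  rw [← h, Multiset.map_map]
  rfl

lemma master_mp {S : Type*} [CommRing S] {N : ℕ} (w : Fin N → S) (h : S[X])
    (he : ∏ i : Fin N, (Polynomial.X - Polynomial.C (w i)) = h) (k : Fin N) :
    (Finset.univ.val.map w).esymm ((k : ℕ) + 1) = (-1) ^ ((k : ℕ) + 1) * h.coeff (N - ((k : ℕ) + 1)) := by
  have hk1 : (k : ℕ) + 1 ≤ N := k.isLt
  have h1 := prodXsubC_coeff w (j := N - ((k : ℕ) + 1)) (Nat.sub_le _ _)
  rw [Nat.sub_sub_self hk1, he] at h1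
  rw [h1, ← mul_assoc, ← mul_pow]
  simp

lemma master_mpr {S : Type*} [CommRing S] {N : ℕ} (w : Fin N → S) (h : S[X])
    (hm : h.Monic) (hd : h.natDegree = N)
    (hc : ∀ k : Fin N, (Finset.univ.val.map w).esymm ((k : ℕ) + 1) =
      (-1) ^ ((k : ℕ) + 1) * h.coeff (N - ((k : ℕ) + 1))) :
    ∏ i : Fin N, (Polynomial.X - Polynomial.C (w i)) = h := by
  rcases Nat.eq_zero_or_pos N with hN | hN
  · subst hN
    rw [Finset.univ_eq_empty, Finset.prod_empty]
    exact ((hm.natDegree_eq_zero).mp hd).symm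
  have : Nontrivial S := by
    rcases subsingleton_or_nontrivial S with hS | hS
    · exfalso
      have : h = 0 := Subsingleton.elim _ _
      rw [this, natDegree_zero] at hd
      omega
    · exact hS
  have hPm : (∏ i : Fin N, (Polynomial.X - Polynomial.C (w i))).Monic :=
    monic_prod_of_monic _ _ fun i _ => monic_X_sub_C _
  have hPd : (∏ i : Fin N, (Polynomial.X - Polynomial.C (w i))).natDegree = N := by
    rw [natDegree_prod_of_monic _ _ fun i _ => monic_X_sub_C _]
    simp
  ext j
  rcases lt_trichotomy j N with hj | hj | hj
  · have h1 := prodXsubC_coeff w (j := j) hj.le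
    have hk : N - j - 1 < N := by omega
    have h2 := hc ⟨N - j - 1, hk⟩
    simp only at h2
    have e1 : N - j - 1 + 1 = N - j := by omega
    have e2 : N - (N - j) = j := Nat.sub_sub_self hj.le
    rw [e1, e2] at h2
    rw [h1, h2, ← mul_assoc, ← mul_pow]
    simp
  · subst hj
    have h1 := hPm.coeff_natDegree
    rw [hPd] at h1
    have h2 := hm.coeff_natDegree
    rw [hd] at h2
    rw [h1, h2]
  · rw [coeff_eq_zero_of_natDegree_lt (by omega), coeff_eq_zero_of_natDegree_lt (by omega)]

-- quotient-level lemmas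
section Quot

variable {A : Type*} [CommRing A] {f : Polynomial A} {n : ℕ}

lemma algebraMap_SA (a : A) :
    algebraMap A (SplittingAlgebra A f n) a = Ideal.Quotient.mk (splittingIdeal A f n) (MvPolynomial.C a) :=
  rfl

/-- The image of `esymm` under the quotient map, as a multiset esymm of the universal roots. -/
lemma mk_esymm (j : ℕ) :
    (Finset.univ.val.map (univRoot A f n)).esymm j =
      Ideal.Quotient.mk (splittingIdeal A f n) (esymm (Fin n) A j) := by
  rw [Finset.esymm_map_val, esymm, map_sum]
  refine Finset.sum_congr rfl fun t _ => ?_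
  rw [map_prod]
  rfl

lemma mk_esymm_eq (k : Fin n) :
    (Finset.univ.val.map (univRoot A f n)).esymm ((k : ℕ) + 1) =
      algebraMap A (SplittingAlgebra A f n) ((-1 : A) ^ ((k : ℕ) + 1) * f.coeff (n - ((k : ℕ) + 1))) := by
  rw [mk_esymm, algebraMap_SA]
  exact Ideal.Quotient.eq.mpr (Ideal.subset_span ⟨k, rfl⟩)

/-- The universal factorization: `f` splits in its splitting algebra. -/
lemma prod_univRoot (hm : f.Monic) (hd : f.natDegree = n) :
    ∏ i : Fin n, (Polynomial.X - Polynomial.C (univRoot A f n i)) =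
      f.map (algebraMap A (SplittingAlgebra A f n)) := by
  rcases subsingleton_or_nontrivial (SplittingAlgebra A f n) with hQs | hQn
  · exact Subsingleton.elim _ _
  refine master_mpr _ _ (hm.map _) (by rw [hm.natDegree_map, hd]) fun k => ?_
  rw [mk_esymm_eq k, Polynomial.coeff_map, map_mul, map_pow, map_neg, map_one]

end Quot

noncomputable instance instTowerSA (R S A : Type*) [CommSemiring R] [CommSemiring S]
    [CommRing A] [SMul R S] [Algebra R A] [Algebra S A] [IsScalarTower R S A]
    (f : Polynomial A) (n : ℕ) : IsScalarTower R S (SplittingAlgebra A f n) :=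
  Ideal.Quotient.isScalarTower R S (splittingIdeal A f n)

section Helpers

lemma nontrivial_of_basis {R M : Type*} {ι : Type*} [CommRing R] [AddCommMonoid M] [Module R M]
    [Nontrivial R] [Nonempty ι] (b : Module.Basis ι R M) : Nontrivial M :=
  ⟨b (Classical.arbitrary ι), 0, b.ne_zero _⟩

noncomputable def basisOfSubsingleton {R M : Type*} (ι : Type*) [CommRing R] [AddCommMonoid M]
    [Module R M] [Subsingleton R] : Module.Basis ι R M :=
  haveI : Subsingleton M := Module.subsingleton R M
  haveI : Subsingleton (ι →₀ R) := ⟨fun a b => Finsupp.ext fun _ => Subsingleton.elim _ _⟩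
  Module.Basis.ofRepr
    { toFun := fun _ => 0
      invFun := fun _ => 0
      map_add' := fun _ _ => Subsingleton.elim _ _
      map_smul' := fun _ _ => Subsingleton.elim _ _
      left_inv := fun _ => Subsingleton.elim _ _
      right_inv := fun _ => Subsingleton.elim _ _ }

lemma quotAlgHom_ext {R σ A' : Type*} [CommRing R] [CommRing A'] [Algebra R A']
    {I : Ideal (MvPolynomial σ R)} {F G : (MvPolynomial σ R ⧸ I) →ₐ[R] A'}
    (h : ∀ i, F (Ideal.Quotient.mk I (MvPolynomial.X i)) =
      G (Ideal.Quotient.mk I (MvPolynomial.X i))) : F = G := by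
  have h0 : F.comp (Ideal.Quotient.mkₐ R I) = G.comp (Ideal.Quotient.mkₐ R I) :=
    MvPolynomial.algHom_ext fun i => h i
  ext x
  obtain ⟨p, rfl⟩ := Ideal.Quotient.mkₐ_surjective R I x
  exact AlgHom.congr_fun h0 p

lemma quotAlgHom_ext' {R S σ A' : Type*} [CommRing R] [CommRing S] [Algebra R S]
    [CommRing A'] [Algebra R A']
    {I : Ideal (MvPolynomial σ S)} {F G : (MvPolynomial σ S ⧸ I) →ₐ[R] A'}
    (hX : ∀ i, F (Ideal.Quotient.mk I (MvPolynomial.X i)) =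
      G (Ideal.Quotient.mk I (MvPolynomial.X i)))
    (hC : ∀ s : S, F (Ideal.Quotient.mk I (MvPolynomial.C s)) =
      G (Ideal.Quotient.mk I (MvPolynomial.C s))) : F = G := by
  have h0 : F.toRingHom.comp (Ideal.Quotient.mk I) = G.toRingHom.comp (Ideal.Quotient.mk I) :=
    MvPolynomial.ringHom_ext hC hX
  ext x
  obtain ⟨p, rfl⟩ := Ideal.Quotient.mk_surjective x
  exact RingHom.congr_fun h0 p

lemma aevalTower_esymm {R S A' σ : Type*} [CommRing R] [CommRing S] [Algebra R S]
    [CommRing A'] [Algebra R A'] [Fintype σ] (φ : S →ₐ[R] A') (u : σ → A') (j : ℕ) :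
    MvPolynomial.aevalTower φ u (esymm σ S j) = (Finset.univ.val.map u).esymm j := by
  rw [esymm, map_sum, Finset.esymm_map_val]
  refine Finset.sum_congr rfl fun t _ => ?_
  rw [map_prod]
  exact Finset.prod_congr rfl fun i _ => MvPolynomial.aevalTower_X _ _ _

lemma fact_aux : ∀ n : ℕ, ∏ i ∈ Finset.range n, (i + 1) = n.factorial := by
  intro n
  induction n with
  | zero => simp
  | succ n ih => rw [Finset.prod_range_succ, ih, Nat.factorial_succ]; ring

end Helpers

universe u

theorem splittingAlgebra_aux : ∀ (n : ℕ) (A : Type u) [CommRing A] (f : Polynomial A),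
    f.Monic → f.natDegree = n →
    ∃ b : Module.Basis ((i : Fin n) → Fin ((i : ℕ) + 1)) A (SplittingAlgebra A f n),
      ∀ m : (i : Fin n) → Fin ((i : ℕ) + 1),
        b m = ∏ i : Fin n, univRoot A f n i ^ ((m i : ℕ)) := by
  intro n
  induction n with
  | zero =>
    intro A _ f hm hd
    have hideal : splittingIdeal A f 0 = ⊥ := by
      rw [splittingIdeal, Set.range_eq_empty, Ideal.span_empty]
    have hinj : Function.Injective (algebraMap A (SplittingAlgebra A f 0)) := by
      intro a b hab
      rw [algebraMap_SA, algebraMap_SA] at hab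
      replace hab := Ideal.Quotient.eq.mp hab
      rw [hideal, Ideal.mem_bot,
        sub_eq_zero] at hab
      exact MvPolynomial.C_injective _ _ hab
    have hsurj : Function.Surjective (algebraMap A (SplittingAlgebra A f 0)) := by
      intro q
      obtain ⟨p, rfl⟩ := Ideal.Quotient.mk_surjective q
      obtain ⟨a, rfl⟩ := MvPolynomial.C_surjective (Fin 0) p
      exact ⟨a, rfl⟩
    let e : A ≃ₐ[A] SplittingAlgebra A f 0 :=
      AlgEquiv.ofBijective (Algebra.ofId A _) ⟨hinj, hsurj⟩
    refine ⟨(Module.Basis.singleton _ A).map e.toLinearEquiv, fun m => ?_⟩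
    rw [Module.Basis.map_apply, Module.Basis.singleton_apply, Finset.univ_eq_empty, Finset.prod_empty]
    exact map_one e
  | succ n IH =>
    intro A _ f hm hd
    rcases subsingleton_or_nontrivial A with hA | hA
    · haveI : Subsingleton (SplittingAlgebra A f (n + 1)) :=
        Module.subsingleton A (SplittingAlgebra A f (n + 1))
      exact ⟨basisOfSubsingleton _, fun m => Subsingleton.elim _ _⟩
    classical
    set Q := SplittingAlgebra A f (n + 1) with hQdef
    set τ := univRoot A f (n + 1) with hτdef
    set B := AdjoinRoot f with hBdef
    set r : B := AdjoinRoot.root f with hrdef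
    have hfB : (f.map (algebraMap A B)).IsRoot r := by
      rw [Polynomial.IsRoot, Polynomial.eval_map]
      exact AdjoinRoot.eval₂_root f
    set g : Polynomial B := f.map (algebraMap A B) /ₘ (Polynomial.X - Polynomial.C r) with hgdef
    have hfg : (Polynomial.X - Polynomial.C r) * g = f.map (algebraMap A B) :=
      Polynomial.mul_divByMonic_eq_iff_isRoot.mpr hfB
    -- power basis of B over A
    set pb := AdjoinRoot.powerBasis' hm with hpbdef
    have hpbdim : pb.dim = n + 1 := by rw [hpbdef, AdjoinRoot.powerBasis'_dim, hd]
    haveI : Nontrivial B := by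
      haveI : Nonempty (Fin pb.dim) := by rw [hpbdim]; exact ⟨⟨0, Nat.succ_pos n⟩⟩
      exact nontrivial_of_basis pb.basis
    have hgm : g.Monic := (monic_X_sub_C r).of_mul_monic_left (by rw [hfg]; exact hm.map _)
    have hfBd : (f.map (algebraMap A B)).natDegree = n + 1 := by rw [hm.natDegree_map, hd]
    have hgd : g.natDegree = n := by
      have h5 := Polynomial.Monic.natDegree_mul (monic_X_sub_C r) hgm
      rw [hfg, hfBd, Polynomial.natDegree_X_sub_C] at h5
      omega
    obtain ⟨b', hb'⟩ := IH B g hgm hgd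
    set Q' := SplittingAlgebra B g n with hQ'def
    set τ' := univRoot B g n with hτ'def
    let bB : Module.Basis (Fin (n + 1)) A B := pb.basis.reindex (finCongr hpbdim)
    have hbB : ∀ k : Fin (n + 1), bB k = r ^ (k : ℕ) := by
      intro k
      rw [Module.Basis.reindex_apply, pb.basis_eq_pow,
        show pb.gen = r from AdjoinRoot.powerBasis'_gen hm]
      congr 1
    haveI : Nontrivial Q' := nontrivial_of_basis b'
    have hPQ : ∏ i : Fin (n + 1), (Polynomial.X - Polynomial.C (τ i)) =
        f.map (algebraMap A Q) := prod_univRoot hm hd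
    have hPQ' : ∏ i : Fin n, (Polynomial.X - Polynomial.C (τ' i)) =
        g.map (algebraMap B Q') := prod_univRoot hgm hgd
    have hτroot : Polynomial.aeval (τ (Fin.last n)) f = 0 := by
      have h6 : Polynomial.eval (τ (Fin.last n)) (f.map (algebraMap A Q)) = 0 := by
        rw [← hPQ, Polynomial.eval_prod]
        refine Finset.prod_eq_zero (Finset.mem_univ (Fin.last n)) ?_
        simp
      rwa [Polynomial.eval_map, ← Polynomial.aeval_def] at h6
    set φ : B →ₐ[A] Q := AdjoinRoot.liftAlgHom f (Algebra.ofId A Q) (τ (Fin.last n)) hτroot with hφdef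
    have hφr : φ r = τ (Fin.last n) :=
      AdjoinRoot.liftAlgHom_root f (Algebra.ofId A Q) (τ (Fin.last n)) hτroot
    -- forward map
    set v : Fin (n + 1) → Q' := Fin.snoc (fun i => τ' i) (algebraMap B Q' r) with hvdef
    have hvcast : ∀ i : Fin n, v i.castSucc = τ' i := fun i => Fin.snoc_castSucc _ _ _
    have hvlast : v (Fin.last n) = algebraMap B Q' r := Fin.snoc_last _ _
    have hv : ∏ i : Fin (n + 1), (Polynomial.X - Polynomial.C (v i)) =
        f.map (algebraMap A Q') := by
      rw [Fin.prod_univ_castSucc, hvlast,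
        Finset.prod_congr rfl fun (i : Fin n) _ => by rw [hvcast i], hPQ',
        IsScalarTower.algebraMap_eq A B Q', ← Polynomial.map_map, ← hfg, Polynomial.map_mul,
        Polynomial.map_sub, Polynomial.map_X, Polynomial.map_C]
      ring
    have hvcond := fun k => master_mp v (f.map (algebraMap A Q')) hv k
    have hFker : splittingIdeal A f (n + 1) ≤ RingHom.ker (MvPolynomial.aeval (R := A) v) := by
      rw [splittingIdeal, Ideal.span_le]
      rintro _ ⟨k, rfl⟩
      simp only [SetLike.mem_coe, RingHom.mem_ker, map_sub, MvPolynomial.aeval_C]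
      rw [MvPolynomial.aeval_esymm_eq_multiset_esymm, hvcond k, Polynomial.coeff_map,
        map_mul, map_pow, map_neg, map_one, sub_self]
    set F : Q →ₐ[A] Q' := Ideal.Quotient.liftₐ _ (MvPolynomial.aeval (R := A) v)
      (fun a ha => RingHom.mem_ker.mp (hFker ha)) with hFdef
    have hFmk : ∀ p : MvPolynomial (Fin (n + 1)) A,
        F (Ideal.Quotient.mk (splittingIdeal A f (n + 1)) p) = MvPolynomial.aeval (R := A) v p :=
      fun p => rfl
    have hFτ : ∀ i, F (τ i) = v i := fun i => by
      rw [hτdef]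
      show F (Ideal.Quotient.mk (splittingIdeal A f (n+1)) (MvPolynomial.X i)) = v i
      rw [hFmk, MvPolynomial.aeval_X]
    -- backward map
    have hsplit : (∏ i : Fin n, (Polynomial.X - Polynomial.C (τ i.castSucc))) *
        (Polynomial.X - Polynomial.C (τ (Fin.last n))) = f.map (algebraMap A Q) := by
      rw [← hPQ, Fin.prod_univ_castSucc]
    have hmapφ : f.map (algebraMap A Q) = (f.map (algebraMap A B)).map φ.toRingHom := by
      rw [Polynomial.map_map]
      congr 1
      exact (φ.comp_algebraMap).symm
    have hPg : ∏ i : Fin n, (Polynomial.X - Polynomial.C (τ i.castSucc)) = g.map φ.toRingHom := by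
      have h3 : (Polynomial.X - Polynomial.C (τ (Fin.last n))) *
          (∏ i : Fin n, (Polynomial.X - Polynomial.C (τ i.castSucc))) =
          (Polynomial.X - Polynomial.C (τ (Fin.last n))) * (g.map φ.toRingHom) := by
        rw [mul_comm, hsplit, hmapφ, ← hfg, Polynomial.map_mul, Polynomial.map_sub,
          Polynomial.map_X, Polynomial.map_C]
        rw [show φ.toRingHom r = τ (Fin.last n) from hφr]
      exact (monic_X_sub_C (τ (Fin.last n))).isRegular.left h3
    have hgcond := fun k => master_mp (fun i : Fin n => τ i.castSucc) (g.map φ.toRingHom) hPg k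
    have hGker : splittingIdeal B g n ≤
        RingHom.ker (MvPolynomial.aevalTower φ (fun i : Fin n => τ i.castSucc)) := by
      rw [splittingIdeal, Ideal.span_le]
      rintro _ ⟨k, rfl⟩
      simp only [SetLike.mem_coe, RingHom.mem_ker, map_sub, MvPolynomial.aevalTower_C]
      rw [aevalTower_esymm, hgcond k, Polynomial.coeff_map,
        map_mul, map_pow, map_neg, map_one]
      exact sub_eq_zero.mpr rfl
    set G : Q' →ₐ[A] Q := Ideal.Quotient.liftₐ _
      (MvPolynomial.aevalTower φ (fun i : Fin n => τ i.castSucc))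
      (fun a ha => RingHom.mem_ker.mp (hGker ha)) with hGdef
    have hGmk : ∀ p : MvPolynomial (Fin n) B,
        G (Ideal.Quotient.mk (splittingIdeal B g n) p) =
          MvPolynomial.aevalTower φ (fun i : Fin n => τ i.castSucc) p := fun p => rfl
    have hGτ' : ∀ i, G (τ' i) = τ i.castSucc := fun i => by
      rw [hτ'def]
      show G (Ideal.Quotient.mk (splittingIdeal B g n) (MvPolynomial.X i)) = τ i.castSucc
      rw [hGmk, MvPolynomial.aevalTower_X]
    have halgQ' : ∀ bb : B, algebraMap B Q' bb =
        Ideal.Quotient.mk (splittingIdeal B g n) (MvPolynomial.C bb) := fun bb => rfl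
    have hGC : ∀ bb : B, G (algebraMap B Q' bb) = φ bb := fun bb => by
      rw [halgQ', hGmk, MvPolynomial.aevalTower_C]
    have hFφ : ∀ bb : B, F (φ bb) = algebraMap B Q' bb := by
      have h7 : F.comp φ = IsScalarTower.toAlgHom A B Q' := by
        apply AdjoinRoot.algHom_ext
        show F (φ r) = algebraMap B Q' r
        rw [hφr, hFτ (Fin.last n), hvlast]
      intro bb
      exact AlgHom.congr_fun h7 bb
    have h1 : F.comp G = AlgHom.id A Q' := by
      apply quotAlgHom_ext'
      · intro i
        show F (G (τ' i)) = τ' i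
        rw [hGτ' i, hFτ, hvcast]
      · intro bb
        show F (G (Ideal.Quotient.mk (splittingIdeal B g n) (MvPolynomial.C bb))) = _
        rw [← halgQ', hGC, hFφ, halgQ']
        rfl
    have h2 : G.comp F = AlgHom.id A Q := by
      apply quotAlgHom_ext
      intro i
      show G (F (τ i)) = τ i
      rw [hFτ]
      refine Fin.lastCases ?_ (fun j => ?_) i
      · rw [hvlast, hGC, hφr]
      · rw [hvcast, hGτ']
    set E : Q ≃ₐ[A] Q' := AlgEquiv.ofAlgHom F G h1 h2 with hEdef
    have hE : ∀ x : Q, E x = F x := fun x => rfl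
    -- index equivalence
    set eIdx : ((i : Fin (n + 1)) → Fin ((i : ℕ) + 1)) ≃
        ((Fin ((Fin.last n : ℕ) + 1)) × ((i : Fin n) → Fin (((i : Fin n).castSucc : ℕ) + 1))) :=
      (Fin.snocEquiv (fun i : Fin (n + 1) => Fin ((i : ℕ) + 1))).symm with heIdxdef
    set eIdx2 : ((Fin ((Fin.last n : ℕ) + 1)) × ((i : Fin n) → Fin (((i : Fin n).castSucc : ℕ) + 1))) ≃
        (Fin (n + 1) × ((i : Fin n) → Fin ((i : ℕ) + 1))) :=
      Equiv.prodCongr (finCongr (by simp)) (Equiv.piCongrRight fun i => finCongr (by simp))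
      with heIdx2def
    set T : Module.Basis (Fin (n + 1) × ((i : Fin n) → Fin ((i : ℕ) + 1))) A Q' := bB.smulTower b'
      with hTdef
    refine ⟨(T.map E.symm.toLinearEquiv).reindex (eIdx.trans eIdx2).symm, fun m => ?_⟩
    rw [Module.Basis.reindex_apply, Equiv.symm_symm, Module.Basis.map_apply]
    show E.symm (T ((eIdx.trans eIdx2) m)) = _
    rw [AlgEquiv.symm_apply_eq]
    have hcomp1 : ((eIdx.trans eIdx2) m).1 = finCongr (by simp) (m (Fin.last n)) := rfl
    have hcomp2 : ∀ i : Fin n, ((eIdx.trans eIdx2) m).2 i =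
        finCongr (by simp) (m i.castSucc) := fun i => rfl
    have hRHS : E (∏ i : Fin (n + 1), τ i ^ ((m i : ℕ))) =
        (∏ i : Fin n, τ' i ^ ((m i.castSucc : ℕ))) *
          algebraMap B Q' (r ^ ((m (Fin.last n) : ℕ))) := by
      rw [map_prod]
      have h8 : ∀ i : Fin (n + 1), E (τ i ^ ((m i : ℕ))) = v i ^ ((m i : ℕ)) := fun i => by
        rw [map_pow, hE, hFτ]
      rw [Finset.prod_congr rfl fun i _ => h8 i, Fin.prod_univ_castSucc, hvlast, map_pow]
      rw [Finset.prod_congr rfl fun (i : Fin n) _ => by rw [hvcast i]]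
    rw [hRHS]
    have hLHS : T ((eIdx.trans eIdx2) m) =
        (∏ i : Fin n, τ' i ^ ((m i.castSucc : ℕ))) *
          algebraMap B Q' (r ^ ((m (Fin.last n) : ℕ))) := by
      rw [hTdef, Module.Basis.smulTower_apply, hbB, hb', Algebra.smul_def]
      rw [hcomp1]
      have h9 : ((finCongr (by simp : ((Fin.last n : ℕ) + 1) = n + 1)
          (m (Fin.last n)) : Fin (n+1)) : ℕ) = (m (Fin.last n) : ℕ) := rfl
      rw [h9]
      rw [mul_comm]
      congr 1
    rw [hLHS]

/-- The splitting algebra `A_f` is a free `A`-module with basis the monomials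
`τ₁^{m₁} ⋯ τₙ^{mₙ}` with `0 ≤ mᵢ < i` (here `univRoot A f n i` is `τ_{i+1}` and the exponent
of `τ_{i+1}` ranges over `Fin (i+1)`); in particular `A_f` is free of rank `n!`. -/
theorem splittingAlgebra_free {A : Type*} [CommRing A]
    (f : Polynomial A) (n : ℕ) (hmonic : f.Monic) (hdeg : f.natDegree = n) :
    (∃ b : Module.Basis ((i : Fin n) → Fin ((i : ℕ) + 1)) A (SplittingAlgebra A f n),
      ∀ m : (i : Fin n) → Fin ((i : ℕ) + 1),
        b m = ∏ i : Fin n, univRoot A f n i ^ ((m i : ℕ))) ∧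
    Module.finrank A (SplittingAlgebra A f n) = n.factorial := by
  obtain ⟨b, hb⟩ := splittingAlgebra_aux n A f hmonic hdeg
  refine ⟨⟨b, hb⟩, ?_⟩
  rcases subsingleton_or_nontrivial A with hA | hA
  · have hf0 : f = 0 := Subsingleton.elim _ _
    have hn : n = 0 := by rw [← hdeg, hf0, Polynomial.natDegree_zero]
    subst hn
    have h1 : Module.rank A (SplittingAlgebra A f 0) = 1 := rank_subsingleton _ _
    rw [Module.finrank, h1]
    simp
  · rw [Module.finrank_eq_card_basis b, Fintype.card_pi]
    simp only [Fintype.card_fin]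
    rw [Fin.prod_univ_eq_prod_range (fun i => i + 1) n]
    exact fact_aux n
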